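/- Every tree has twin-width at most 2. -/

import Mathlib

open scoped Classical

noncomputable section

/-- A trigraph: a finite graph whose edges are colored black or red. -/
structure Trigraph (V : Type*) where
  black : V → V → Prop
  red : V → V → Prop
  black_symm : ∀ u v, black u v → black v u
  red_symm : ∀ u v, red u v → red v u
  black_irrefl : ∀ v, ¬ black v v
  red_irrefl : ∀ v, ¬ red v v
  not_black_and_red : ∀ u v, ¬ (black u v ∧ red u v)

variable {V : Type*}

/-- A simple graph seen as a trigraph with no red edges. -/
def SimpleGraph.toTrigraph (G : SimpleGraph V) : Trigraph V where
  black := G.Adj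
  red _ _ := False
  black_symm _ _ h := h.symm
  red_symm _ _ h := h.elim
  black_irrefl _ h := G.irrefl h
  red_irrefl _ h := h
  not_black_and_red _ _ h := h.2

/-- Induced subtrigraph on a set of vertices. -/
def Trigraph.induce (G : Trigraph V) (s : Set V) : Trigraph s where
  black u v := G.black u.1 v.1
  red u v := G.red u.1 v.1
  black_symm _ _ h := G.black_symm _ _ h
  red_symm _ _ h := G.red_symm _ _ h
  black_irrefl v := G.black_irrefl v.1
  red_irrefl v := G.red_irrefl v.1
  not_black_and_red u v := G.not_black_and_red u.1 v.1

/-- The discrete partition of the vertex set into singletons. -/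
def discretePart (V : Type*) [Fintype V] : Finset (Finset V) :=
  Finset.univ.image fun v => ({v} : Finset V)

/-- `Q` is obtained from the partition `P` by merging (contracting) two distinct parts. -/
def MergeStep (P Q : Finset (Finset V)) : Prop :=
  ∃ A ∈ P, ∃ B ∈ P, A ≠ B ∧ Q = insert (A ∪ B) ((P.erase A).erase B)

/-- Two parts are joined by a red edge in the quotient trigraph if there is a red edge
between them, or if they are not homogeneously connected by black edges. -/
def Trigraph.redAdj (G : Trigraph V) (A B : Finset V) : Prop :=
  A ≠ B ∧ ((∃ a ∈ A, ∃ b ∈ B, G.red a b) ∨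
    ((∃ a ∈ A, ∃ b ∈ B, G.black a b) ∧ ¬ ∀ a ∈ A, ∀ b ∈ B, G.black a b))

/-- The red degree of a part `A` in the quotient of `G` by the partition `P`. -/
def Trigraph.redDeg (G : Trigraph V) (P : Finset (Finset V)) (A : Finset V) : ℕ :=
  (P.filter fun B => G.redAdj A B).card

/-- The maximum red degree of the quotient of `G` by the partition `P`. -/
def Trigraph.maxRedDeg (G : Trigraph V) (P : Finset (Finset V)) : ℕ :=
  P.sup fun A => G.redDeg P A

/-- A contraction sequence of partitions: starts with the discrete partition, and each
step merges two parts. -/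
def IsCSeq (V : Type*) [Fintype V] (len : ℕ) (f : ℕ → Finset (Finset V)) : Prop :=
  f 0 = discretePart V ∧ ∀ i < len, MergeStep (f i) (f (i + 1))

/-- The twin-width of a trigraph: the minimum over all complete contraction sequences of
the maximum red degree attained. -/
def Trigraph.tww [Fintype V] (G : Trigraph V) : ℕ :=
  sInf { w | ∃ f : ℕ → Finset (Finset V),
    IsCSeq V (Fintype.card V - 1) f ∧
    f (Fintype.card V - 1) = {Finset.univ} ∧
    ∀ i ≤ Fintype.card V - 1, G.maxRedDeg (f i) ≤ w }

/-- The final partition of a `U`-contraction sequence: `U` is one part,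
all other vertices are singletons. -/
def finalOn (V : Type*) [Fintype V] (U : Finset V) : Finset (Finset V) :=
  insert U ((Finset.univ \ U).image fun v => ({v} : Finset V))

/-- `tww_U(G)`: the minimum width of a partial contraction sequence involving only
vertices of `U` and contracting `U` into a single part. -/
def Trigraph.twwOn [Fintype V] (G : Trigraph V) (U : Finset V) : ℕ :=
  sInf { w | ∃ f : ℕ → Finset (Finset V),
    IsCSeq V (U.card - 1) f ∧ f (U.card - 1) = finalOn V U ∧
    ∀ i ≤ U.card - 1, G.maxRedDeg (f i) ≤ w }

/-- A partition respects `A` if all vertices of `A` are singleton parts of red degree `0`. -/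
def Trigraph.Respects (G : Trigraph V) (A : Finset V) (P : Finset (Finset V)) : Prop :=
  (∀ a ∈ A, ({a} : Finset V) ∈ P) ∧ ∀ a ∈ A, G.redDeg P {a} = 0

/-- A partition respecting `A` is complete if no two parts outside `A` have the same
(black) neighborhood in `A`. -/
def Trigraph.CompleteFor (G : Trigraph V) (A : Finset V) (P : Finset (Finset V)) : Prop :=
  ∀ B ∈ P, ∀ C ∈ P, B ≠ C → Disjoint B A → Disjoint C A →
    ¬ ∀ a ∈ A, ((∃ b ∈ B, G.black b a) ↔ ∃ c ∈ C, G.black c a)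

/-- `tww(G, A)`: the minimum width of a complete contraction sequence respecting `A`. -/
def Trigraph.twwR [Fintype V] (G : Trigraph V) (A : Finset V) : ℕ :=
  sInf { w | ∃ (len : ℕ) (f : ℕ → Finset (Finset V)), IsCSeq V len f ∧
    (∀ i ≤ len, G.Respects A (f i)) ∧ G.CompleteFor A (f len) ∧
    ∀ i ≤ len, G.maxRedDeg (f i) ≤ w }


namespace TwwTree

variable {V : Type*}

/-- `P` is a partition of the vertex set. -/
def IsPart (P : Finset (Finset V)) : Prop :=
  (∀ A ∈ P, A.Nonempty) ∧ (∀ A ∈ P, ∀ B ∈ P, A ≠ B → Disjoint A B) ∧ ∀ v : V, ∃ A ∈ P, v ∈ A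

lemma redAdj_iff (G : SimpleGraph V) (A B : Finset V) :
    (G.toTrigraph).redAdj A B ↔
      A ≠ B ∧ (∃ a ∈ A, ∃ b ∈ B, G.Adj a b) ∧ ¬ ∀ a ∈ A, ∀ b ∈ B, G.Adj a b := by
  simp [Trigraph.redAdj, SimpleGraph.toTrigraph]

lemma not_redAdj_of_no_edge {G : SimpleGraph V} {A B : Finset V}
    (h : ∀ a ∈ A, ∀ b ∈ B, ¬ G.Adj a b) : ¬ (G.toTrigraph).redAdj A B := by
  rw [redAdj_iff]; rintro ⟨-, ⟨a, ha, b, hb, hab⟩, -⟩; exact h a ha b hb hab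

lemma not_redAdj_singleton (G : SimpleGraph V) (a b : V) :
    ¬ (G.toTrigraph).redAdj {a} {b} := by
  rw [redAdj_iff]
  rintro ⟨hne, ⟨a', ha', b', hb', hab⟩, hn⟩
  simp only [Finset.mem_singleton] at ha' hb'
  subst ha'; subst hb'
  exact hn (by simpa using hab)

lemma redAdj_exists_edge {G : SimpleGraph V} {A B : Finset V}
    (h : (G.toTrigraph).redAdj A B) : ∃ a ∈ A, ∃ b ∈ B, G.Adj a b :=
  ((redAdj_iff G A B).1 h).2.1

lemma redAdj_comm {G : SimpleGraph V} {A B : Finset V} :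
    (G.toTrigraph).redAdj A B ↔ (G.toTrigraph).redAdj B A := by
  rw [redAdj_iff, redAdj_iff]
  constructor <;> rintro ⟨h1, ⟨a, ha, b, hb, hab⟩, h3⟩ <;>
    exact ⟨h1.symm, ⟨b, hb, a, ha, hab.symm⟩,
      fun h => h3 fun x hx y hy => (h y hy x hx).symm⟩

lemma redDeg_le_of_candidates {G : SimpleGraph V} (P S : Finset (Finset V)) (A : Finset V)
    (h : ∀ B ∈ P, (G.toTrigraph).redAdj A B → B ∈ S) :
    (G.toTrigraph).redDeg P A ≤ S.card := by
  apply Finset.card_le_card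
  intro B hB
  rw [Finset.mem_filter] at hB
  exact h B hB.1 hB.2

lemma part_eq_part {P : Finset (Finset V)} (hP : IsPart P) {B C : Finset V}
    (hB : B ∈ P) (hC : C ∈ P) {x : V} (hxB : x ∈ B) (hxC : x ∈ C) : B = C := by
  by_contra hne
  exact Finset.disjoint_left.1 (hP.2.1 B hB C hC hne) hxB hxC

lemma part_eq_singleton {P : Finset (Finset V)} (hP : IsPart P) {x : V}
    (hs : ({x} : Finset V) ∈ P) {B : Finset V} (hB : B ∈ P) (hxB : x ∈ B) :
    B = {x} :=
  part_eq_part hP hB hs hxB (Finset.mem_singleton_self x)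

lemma maxRedDeg_le_two {G : SimpleGraph V} {P : Finset (Finset V)}
    (h : ∀ A ∈ P, (G.toTrigraph).redDeg P A ≤ 2) :
    (G.toTrigraph).maxRedDeg P ≤ 2 :=
  Finset.sup_le h

end TwwTree

namespace TwwTree

variable {V : Type*}

lemma part_cases {P₀ : Finset (Finset V)} {U : Finset V}
    (hP : IsPart P₀) (hsing : ∀ u ∈ U, ({u} : Finset V) ∈ P₀)
    {A : Finset V} (hA : A ∈ P₀) : (∃ x ∈ U, A = {x}) ∨ Disjoint A U := by
  by_cases h : Disjoint A U
  · exact Or.inr h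
  · left
    obtain ⟨x, hxA, hxU⟩ := Finset.not_disjoint_iff.1 h
    exact ⟨x, hxU, part_eq_singleton hP (hsing x hxU) hA hxA⟩

lemma disj_of_mem_not_mem {P₀ : Finset (Finset V)} {U : Finset V}
    (hP : IsPart P₀) (hsing : ∀ u ∈ U, ({u} : Finset V) ∈ P₀)
    {B : Finset V} (hB : B ∈ P₀) {b : V} (hbB : b ∈ B) (hbU : b ∉ U) :
    Disjoint B U := by
  rcases part_cases hP hsing hB with ⟨x, hxU, rfl⟩ | h
  · simp only [Finset.mem_singleton] at hbB; subst hbB; exact absurd hxU hbU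
  · exact h

lemma deg0 (G : SimpleGraph V) {P₀ : Finset (Finset V)} {U : Finset V} {u₀ : V} {D : Finset V}
    (hP : IsPart P₀)
    (hsing : ∀ u ∈ U, ({u} : Finset V) ∈ P₀)
    (hexit : ∀ x ∈ U, ∀ y, G.Adj x y → y ∉ U → x = u₀)
    (hamb : ∀ B ∈ P₀, Disjoint B U →
      (P₀.filter fun C => Disjoint C U ∧ (G.toTrigraph).redAdj B C).card ≤ 1)
    (hadjS : ∀ B ∈ P₀, Disjoint B U → B ≠ D → (∃ y ∈ B, G.Adj u₀ y) → ∃ y, B = {y}) :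
    ∀ A ∈ P₀, (G.toTrigraph).redDeg P₀ A ≤ 2 := by
  intro A hA
  rcases part_cases hP hsing hA with ⟨x, hxU, rfl⟩ | hdisj
  · -- A = {x}, x ∈ U : candidates ⊆ {D}
    have : (G.toTrigraph).redDeg P₀ {x} ≤ ({D} : Finset (Finset V)).card := by
      apply redDeg_le_of_candidates
      intro B hB hred
      obtain ⟨a, ha, b, hbB, hab⟩ := redAdj_exists_edge hred
      simp only [Finset.mem_singleton] at ha
      rw [ha] at hab
      by_cases hbU : b ∈ U
      · rw [part_eq_singleton hP (hsing b hbU) hB hbB] at hred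
        exact absurd hred (not_redAdj_singleton G x b)
      · have hxu : x = u₀ := hexit x hxU b hab hbU
        have hBdisj : Disjoint B U := disj_of_mem_not_mem hP hsing hB hbB hbU
        by_cases hBD : B = D
        · simp [hBD]
        · obtain ⟨y, rfl⟩ := hadjS B hB hBdisj hBD ⟨b, hbB, hxu ▸ hab⟩
          exact absurd hred (not_redAdj_singleton G x y)
    simpa using this.trans (by simp)
  · -- A ambient : candidates ⊆ insert {u₀} (amb-filter)
    have hcand : (G.toTrigraph).redDeg P₀ A ≤
        (insert ({u₀} : Finset V)
          (P₀.filter fun C => Disjoint C U ∧ (G.toTrigraph).redAdj A C)).card := by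
      apply redDeg_le_of_candidates
      intro B hB hred
      obtain ⟨a, haA, b, hbB, hab⟩ := redAdj_exists_edge hred
      by_cases hbU : b ∈ U
      · have hBb : B = {b} := part_eq_singleton hP (hsing b hbU) hB hbB
        have haU : a ∉ U := Finset.disjoint_left.1 hdisj haA
        have : b = u₀ := hexit b hbU a hab.symm haU
        subst this
        simp [hBb]
      · have hBdisj : Disjoint B U := disj_of_mem_not_mem hP hsing hB hbB hbU
        exact Finset.mem_insert_of_mem (Finset.mem_filter.2 ⟨hB, hBdisj, hred⟩)
    calc (G.toTrigraph).redDeg P₀ A ≤ _ := hcand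
      _ ≤ _ + 1 := Finset.card_insert_le _ _
      _ ≤ 2 := by have := hamb A hA hdisj; omega
end TwwTree

namespace TwwTree

variable {V : Type*}

/-- If every part containing a red neighbour of `A` meets `S`, and parts are pairwise
disjoint, then the red degree of `A` is at most `|S|`. -/
lemma redDeg_le_card_of_witness {G : SimpleGraph V} (P : Finset (Finset V)) (A : Finset V)
    (S : Finset V)
    (hdisj : ∀ B ∈ P, ∀ C ∈ P, B ≠ C → Disjoint B C)
    (h : ∀ B ∈ P, (G.toTrigraph).redAdj A B → ∃ s ∈ S, s ∈ B) :
    (G.toTrigraph).redDeg P A ≤ S.card := by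
  classical
  set F := P.filter fun B => (G.toTrigraph).redAdj A B with hF
  have hFP : F ⊆ P := Finset.filter_subset _ _
  have hdisj' : ∀ B ∈ F, ∀ C ∈ F, B ≠ C → Disjoint (S ∩ B) (S ∩ C) := fun B hB C hC hne =>
    Finset.disjoint_of_subset_left Finset.inter_subset_right
      (Finset.disjoint_of_subset_right Finset.inter_subset_right
        (hdisj B (hFP hB) C (hFP hC) hne))
  calc F.card = ∑ _B ∈ F, 1 := by simp
    _ ≤ ∑ B ∈ F, (S ∩ B).card := by
        apply Finset.sum_le_sum
        intro B hB
        rw [Finset.mem_filter] at hB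
        obtain ⟨s, hsS, hsB⟩ := h B hB.1 hB.2
        exact Finset.card_pos.2 ⟨s, Finset.mem_inter.2 ⟨hsS, hsB⟩⟩
    _ = (F.biUnion fun B => S ∩ B).card := (Finset.card_biUnion hdisj').symm
    _ ≤ S.card := Finset.card_le_card (by
        intro s hs
        rw [Finset.mem_biUnion] at hs
        obtain ⟨B, -, hsB⟩ := hs
        exact (Finset.mem_inter.1 hsB).1)

/-- Walking inside `U` from a vertex of `W` to a vertex outside `W` must pass through
`u₀`, provided `W` is closed under adjacency within `U \ {u₀}`. -/
lemma cross_walk {G : SimpleGraph V} {W U : Finset V} {u₀ : V}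
    (hclos : ∀ z ∈ W, ∀ y, G.Adj z y → y ∈ U → y ≠ u₀ → y ∈ W) :
    ∀ {a x : V} (q : G.Walk a x), (∀ z ∈ q.support, z ∈ U) → a ∈ W → x ∉ W →
      u₀ ∈ q.support := by
  intro a x q
  induction q with
  | nil => intro _ ha hx; exact absurd ha hx
  | @cons u v w h q ih =>
    intro hsupp ha hx
    have hvU : v ∈ U := hsupp v (by simp [SimpleGraph.Walk.support_cons])
    by_cases hvu : v = u₀
    · subst hvu
      simp [SimpleGraph.Walk.support_cons, SimpleGraph.Walk.start_mem_support]
    · have hvW : v ∈ W := hclos u ha v h hvU hvu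
      have := ih (fun z hz => hsupp z (by simp [SimpleGraph.Walk.support_cons, hz])) hvW hx
      simp [SimpleGraph.Walk.support_cons, this]

end TwwTree

namespace TwwTree

lemma main_lemma {V : Type*} [Fintype V] {G : SimpleGraph V} (hT : G.IsTree) :
    ∀ (n : ℕ) (U : Finset V), U.card = n →
    ∀ (P₀ : Finset (Finset V)) (u₀ : V) (D : Finset V),
    IsPart P₀ → u₀ ∈ U →
    (∀ u ∈ U, ({u} : Finset V) ∈ P₀) →
    (∀ x ∈ U, ∀ y, G.Adj x y → y ∉ U → x = u₀) →
    (Finset.univ.filter fun y => y ∉ U ∧ y ∉ D ∧ G.Adj u₀ y).card ≤ 1 →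
    (∀ x ∈ U, ∃ p : G.Walk u₀ x, ∀ y ∈ p.support, y ∈ U) →
    (∀ B ∈ P₀, Disjoint B U →
      (P₀.filter fun C => Disjoint C U ∧ (G.toTrigraph).redAdj B C).card ≤ 1) →
    (∀ B ∈ P₀, Disjoint B U → B ≠ D → (∃ y ∈ B, G.Adj u₀ y) → ∃ y, B = {y}) →
    (D = ∅ ∨ D ∈ P₀ ∧ Disjoint D U ∧ ∀ y ∈ D, ∀ x, G.Adj y x → x ∈ D ∨ x = u₀) →
    ∃ f : ℕ → Finset (Finset V),
      f 0 = P₀ ∧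
      (∀ i < (if D = ∅ then U.card - 1 else U.card), MergeStep (f i) (f (i + 1))) ∧
      f (if D = ∅ then U.card - 1 else U.card)
        = insert (U ∪ D) ((P₀.filter fun B => Disjoint B U).erase D) ∧
      ∀ i ≤ (if D = ∅ then U.card - 1 else U.card), (G.toTrigraph).maxRedDeg (f i) ≤ 2 := by
  intro n
  induction n using Nat.strong_induction_on with
  | _ n IH =>
  intro U hUcard P₀ u₀ D hP hu₀ hsing hexit hout hconn hamb hadjS hD
  subst hUcard
  have hdeg0 : ∀ A ∈ P₀, (G.toTrigraph).redDeg P₀ A ≤ 2 :=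
    deg0 G hP hsing hexit hamb hadjS
  by_cases hU1 : U.card ≤ 1
  · -- base case : U = {u₀}
    have hUeq : U = {u₀} := by
      obtain ⟨x, hx⟩ := Finset.card_eq_one.1
        (le_antisymm hU1 (Finset.card_pos.2 ⟨u₀, hu₀⟩))
      rw [hx]
      rw [hx, Finset.mem_singleton] at hu₀
      rw [hu₀]
    subst hUeq
    have hu₀P : ({u₀} : Finset V) ∈ P₀ := hsing u₀ hu₀
    have hPfilter : P₀.filter (fun B => Disjoint B ({u₀} : Finset V)) = P₀.erase {u₀} := by
      ext B
      simp only [Finset.mem_filter, Finset.mem_erase, Finset.disjoint_singleton_right]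
      constructor
      · rintro ⟨hB, hu⟩
        exact ⟨fun h => hu (h ▸ Finset.mem_singleton_self u₀), hB⟩
      · rintro ⟨hne, hB⟩
        refine ⟨hB, fun hu => hne ?_⟩
        exact part_eq_singleton hP hu₀P hB hu
    by_cases hDe : D = ∅
    · subst hDe
      refine ⟨fun _ => P₀, rfl, ?_, ?_, ?_⟩
      · simp
      · have h0 : (∅ : Finset V) ∉ P₀.erase {u₀} := by
          intro h
          exact absurd (hP.1 ∅ (Finset.mem_of_mem_erase h)) (by simp)
        simp only [if_pos rfl, Finset.union_empty, hPfilter, Finset.erase_eq_of_notMem h0]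
        exact (Finset.insert_erase hu₀P).symm
      · intro i _
        exact maxRedDeg_le_two hdeg0
    · -- base case with nonempty accumulator D : one merge
      obtain ⟨hDP, hDdisjU, hDnbr⟩ := hD.resolve_left hDe
      have hu₀D : u₀ ∉ D := Finset.disjoint_right.1 hDdisjU hu₀
      have hne : ({u₀} : Finset V) ≠ D := by
        intro h; exact hu₀D (h ▸ Finset.mem_singleton_self u₀)
      set Pend := insert (({u₀} : Finset V) ∪ D) ((P₀.erase {u₀}).erase D) with hPend
      have hcard1 : ({u₀} : Finset V).card = 1 := Finset.card_singleton u₀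
      have hPendP : IsPart Pend := by
        refine ⟨?_, ?_, ?_⟩
        · intro A hA
          rcases Finset.mem_insert.1 hA with rfl | hA
          · exact ⟨u₀, by simp⟩
          · exact hP.1 A (Finset.mem_of_mem_erase (Finset.mem_of_mem_erase hA))
        · intro A hA B hB hAB
          rcases Finset.mem_insert.1 hA with rfl | hA <;>
            rcases Finset.mem_insert.1 hB with rfl | hB
          · exact absurd rfl hAB
          · obtain ⟨hBD, hBu, hBP⟩ :
                B ≠ D ∧ B ≠ {u₀} ∧ B ∈ P₀ := by
              have h1 := Finset.mem_of_mem_erase hB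
              exact ⟨Finset.ne_of_mem_erase hB, Finset.ne_of_mem_erase h1,
                Finset.mem_of_mem_erase h1⟩
            refine Finset.disjoint_union_left.2 ⟨?_, ?_⟩
            · exact (hP.2.1 _ hu₀P _ hBP hBu.symm)
            · exact hP.2.1 _ hDP _ hBP hBD.symm
          · obtain ⟨hAD, hAu, hAP⟩ :
                A ≠ D ∧ A ≠ {u₀} ∧ A ∈ P₀ := by
              have h1 := Finset.mem_of_mem_erase hA
              exact ⟨Finset.ne_of_mem_erase hA, Finset.ne_of_mem_erase h1,
                Finset.mem_of_mem_erase h1⟩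
            refine Finset.disjoint_union_right.2 ⟨?_, ?_⟩
            · exact hP.2.1 _ hAP _ hu₀P hAu
            · exact hP.2.1 _ hAP _ hDP hAD
          · exact hP.2.1 _ (Finset.mem_of_mem_erase (Finset.mem_of_mem_erase hA)) _
              (Finset.mem_of_mem_erase (Finset.mem_of_mem_erase hB)) hAB
        · intro v
          obtain ⟨A, hA, hvA⟩ := hP.2.2 v
          by_cases hA1 : A = {u₀}
          · exact ⟨_, Finset.mem_insert_self _ _, by
              subst hA1; simp only [Finset.mem_union]; exact Or.inl hvA⟩
          by_cases hA2 : A = D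
          · exact ⟨_, Finset.mem_insert_self _ _, by
              subst hA2; simp only [Finset.mem_union]; exact Or.inr hvA⟩
          · exact ⟨A, Finset.mem_insert_of_mem
              (Finset.mem_erase.2 ⟨hA2, Finset.mem_erase.2 ⟨hA1, hA⟩⟩), hvA⟩
      refine ⟨fun i => if i = 0 then P₀ else Pend, rfl, ?_, ?_, ?_⟩
      · intro i hi
        rw [if_neg hDe, hcard1] at hi
        interval_cases i
        simp only [if_pos rfl, if_neg one_ne_zero]
        exact ⟨{u₀}, hu₀P, D, hDP, hne, rfl⟩
      · rw [if_neg hDe, hcard1]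
        simp only [if_neg one_ne_zero, hPend, hPfilter]
      · intro i hi
        rw [if_neg hDe, hcard1] at hi
        interval_cases i
        · exact maxRedDeg_le_two hdeg0
        · simp only [if_neg one_ne_zero]
          apply maxRedDeg_le_two
          intro A hA
          rcases Finset.mem_insert.1 hA with rfl | hA'
          · -- the merged part {u₀} ∪ D
            have := redDeg_le_card_of_witness (G := G) Pend ({u₀} ∪ D)
              (Finset.univ.filter fun y => y ∉ ({u₀} : Finset V) ∧ y ∉ D ∧ G.Adj u₀ y)
              hPendP.2.1 ?_
            · exact this.trans (hout.trans one_le_two)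
            · intro B hB hred
              obtain ⟨a, haA, b, hbB, hab⟩ := redAdj_exists_edge hred
              have hbF : b ∉ ({u₀} : Finset V) ∪ D := by
                intro hbF
                have : B = ({u₀} : Finset V) ∪ D :=
                  part_eq_part hPendP hB (Finset.mem_insert_self _ _) hbB hbF
                exact ((redAdj_iff G _ _).1 hred).1 this.symm
              rcases Finset.mem_union.1 haA with ha | ha
              · rw [Finset.mem_singleton] at ha
                subst ha
                refine ⟨b, Finset.mem_filter.2 ⟨Finset.mem_univ _, ?_, ?_, hab⟩, hbB⟩
                · intro h; exact hbF (Finset.mem_union_left _ h)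
                · intro h; exact hbF (Finset.mem_union_right _ h)
              · rcases hDnbr a ha b hab with h | h
                · exact absurd (Finset.mem_union_right _ h) hbF
                · subst h
                  exact absurd (Finset.mem_union_left _ (Finset.mem_singleton_self b)) hbF
          · -- an untouched ambient part
            have hBD := Finset.ne_of_mem_erase hA'
            have hBu := Finset.ne_of_mem_erase (Finset.mem_of_mem_erase hA')
            have hBP := Finset.mem_of_mem_erase (Finset.mem_of_mem_erase hA')
            have hdisjU : Disjoint A ({u₀} : Finset V) := by
              rw [Finset.disjoint_singleton_right]
              intro hu
              exact hBu (part_eq_singleton hP hu₀P hBP hu)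
            have hsubS : (G.toTrigraph).redDeg Pend A ≤
                (insert (({u₀} : Finset V) ∪ D)
                  (P₀.filter fun C => Disjoint C ({u₀} : Finset V) ∧
                    (G.toTrigraph).redAdj A C)).card := by
              apply redDeg_le_of_candidates
              intro C hC hred
              rcases Finset.mem_insert.1 hC with rfl | hC'
              · exact Finset.mem_insert_self _ _
              · have hCD := Finset.ne_of_mem_erase hC'
                have hCu := Finset.ne_of_mem_erase (Finset.mem_of_mem_erase hC')
                have hCP := Finset.mem_of_mem_erase (Finset.mem_of_mem_erase hC')
                refine Finset.mem_insert_of_mem (Finset.mem_filter.2 ⟨hCP, ?_, hred⟩)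
                rw [Finset.disjoint_singleton_right]
                intro hu
                exact hCu (part_eq_singleton hP hu₀P hCP hu)
            refine hsubS.trans ?_
            calc _ ≤ (P₀.filter fun C => Disjoint C ({u₀} : Finset V) ∧
                  (G.toTrigraph).redAdj A C).card + 1 := Finset.card_insert_le _ _
              _ ≤ 2 := by
                  have := hamb A hBP hdisjU
                  omega
  · -- recursive case
    push_neg at hU1
    classical
    -- find a neighbour c of u₀ inside U
    obtain ⟨x, hxU, hxne⟩ := Finset.exists_mem_ne hU1 u₀
    obtain ⟨w, hw⟩ := hconn x hxU
    obtain ⟨c, hadj, hcU⟩ : ∃ c, G.Adj u₀ c ∧ c ∈ U := by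
      cases w with
      | nil => exact absurd rfl hxne
      | cons h p =>
        exact ⟨_, h, hw _ (by
          rw [SimpleGraph.Walk.support_cons]
          exact List.mem_cons_of_mem _ p.start_mem_support)⟩
    set W := U.filter (fun z => z ≠ u₀ ∧
      ∃ q : G.Walk c z, ∀ y ∈ q.support, y ∈ U ∧ y ≠ u₀) with hWdef
    have hcne : c ≠ u₀ := fun h => G.irrefl (h ▸ hadj)
    have hcW : c ∈ W := Finset.mem_filter.2 ⟨hcU, hcne, SimpleGraph.Walk.nil, by
      intro y hy
      rw [SimpleGraph.Walk.support_nil, List.mem_singleton] at hy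
      subst hy; exact ⟨hcU, hcne⟩⟩
    have hWU : W ⊆ U := Finset.filter_subset _ _
    have hu₀W : u₀ ∉ W := fun h => ((Finset.mem_filter.1 h).2.1 rfl)
    have hclos : ∀ z ∈ W, ∀ y, G.Adj z y → y ∈ U → y ≠ u₀ → y ∈ W := by
      intro z hz y hzy hyU hyu
      obtain ⟨hzU, hzne, q, hq⟩ := Finset.mem_filter.1 hz
      refine Finset.mem_filter.2 ⟨hyU, hyu, q.concat hzy, ?_⟩
      intro s hs
      rw [SimpleGraph.Walk.support_concat, List.mem_append] at hs
      rcases hs with hs | hs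
      · exact hq s hs
      · rw [List.mem_singleton] at hs; subst hs; exact ⟨hyU, hyu⟩
    have huniq : ∀ z ∈ W, G.Adj u₀ z → z = c := by
      intro z hz hadjz
      by_contra hzc
      obtain ⟨hzU, hzne, q, hq⟩ := Finset.mem_filter.1 hz
      have hq'path : q.bypass.IsPath := q.bypass_isPath
      have hq'supp : ∀ y ∈ q.bypass.support, y ∈ U ∧ y ≠ u₀ :=
        fun y hy => hq y (q.support_bypass_subset hy)
      have hp1 : (SimpleGraph.Walk.cons hadjz SimpleGraph.Walk.nil : G.Walk u₀ z).IsPath := by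
        simp [SimpleGraph.Walk.isPath_def, hadjz.ne]
      have hp2 : (SimpleGraph.Walk.cons hadj q.bypass).IsPath := by
        apply hq'path.cons
        intro h
        exact (hq'supp u₀ h).2 rfl
      obtain ⟨p, -, hup⟩ := hT.existsUnique_path u₀ z
      have e1 := hup (SimpleGraph.Walk.cons hadjz SimpleGraph.Walk.nil) hp1
      have e2 := hup (SimpleGraph.Walk.cons hadj q.bypass) hp2
      have heq := e1.trans e2.symm
      have hc1 : c ∈ (SimpleGraph.Walk.cons hadj q.bypass).support := by
        rw [SimpleGraph.Walk.support_cons]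
        exact List.mem_cons_of_mem _ q.bypass.start_mem_support
      rw [← heq] at hc1
      simp only [SimpleGraph.Walk.support_cons, SimpleGraph.Walk.support_nil,
        List.mem_cons, List.mem_singleton] at hc1
      rcases hc1 with h | h | h
      · exact hcne h
      · exact hzc h.symm
      · exact absurd h List.not_mem_nil
    have hwexit : ∀ z ∈ W, ∀ y, G.Adj z y → y ∉ W → z = c ∧ y = u₀ := by
      intro z hz y hzy hyW
      by_cases hyU : y ∈ U
      · by_cases hyu : y = u₀
        · subst hyu
          exact ⟨huniq z hz hzy.symm, rfl⟩
        · exact absurd (hclos z hz y hzy hyU hyu) hyW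
      · exact absurd (hexit z (hWU hz) y hzy hyU) (fun h =>
          hu₀W (h ▸ hz))
    -- the two halves
    set U' := U \ W with hU'def
    set amb₀ := P₀.filter (fun B => Disjoint B W) with hamb₀def
    set P₁ := insert W amb₀ with hP₁def
    set D' := W ∪ D with hD'def
    set P₂₀ := insert D' (amb₀.erase D) with hP₂₀def
    have hWne : W.Nonempty := ⟨c, hcW⟩
    have hWcard : W.card < U.card :=
      Finset.card_lt_card ⟨hWU, fun h => hu₀W (h hu₀)⟩
    have hWpos : 0 < W.card := Finset.card_pos.2 hWne
    have hU'W : U' ∪ W = U := Finset.sdiff_union_of_subset hWU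
    have hU'card : U'.card = U.card - W.card := Finset.card_sdiff_of_subset hWU
    have hu₀U' : u₀ ∈ U' := Finset.mem_sdiff.2 ⟨hu₀, hu₀W⟩
    have hU'pos : 0 < U'.card := Finset.card_pos.2 ⟨u₀, hu₀U'⟩
    have hU'lt : U'.card < U.card := by omega
    have hcD : c ∉ D := by
      rcases hD with rfl | ⟨-, hDdisjU, -⟩
      · exact Finset.notMem_empty c
      · exact Finset.disjoint_right.1 hDdisjU hcU
    have hemptyamb : (∅ : Finset V) ∉ amb₀ := by
      intro h
      exact absurd (hP.1 ∅ (Finset.mem_filter.1 h).1) (by simp)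
    -- ========== phase 1 hypotheses ==========
    have hexit1 : ∀ z ∈ W, ∀ y, G.Adj z y → y ∉ W → z = c :=
      fun z hz y hzy hyW => (hwexit z hz y hzy hyW).1
    have hout1 : (Finset.univ.filter fun y => y ∉ W ∧ y ∉ (∅ : Finset V) ∧ G.Adj c y).card
        ≤ 1 := by
      refine le_trans (Finset.card_le_card ?_) (by simp : ({u₀} : Finset V).card ≤ 1)
      intro y hy
      obtain ⟨-, hyW, -, hadjy⟩ := Finset.mem_filter.1 hy
      rw [Finset.mem_singleton]
      exact (hwexit c hcW y hadjy hyW).2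
    have hconn1 : ∀ z ∈ W, ∃ p : G.Walk c z, ∀ y ∈ p.support, y ∈ W := by
      intro z hz
      obtain ⟨hzU, hzne, q, hq⟩ := Finset.mem_filter.1 hz
      refine ⟨q, fun y hy => ?_⟩
      obtain ⟨hyU, hyu⟩ := hq y hy
      exact Finset.mem_filter.2 ⟨hyU, hyu, q.takeUntil y hy, fun s hs =>
        hq s (q.support_takeUntil_subset hy hs)⟩
    have hadjS1 : ∀ B ∈ P₀, Disjoint B W → B ≠ (∅ : Finset V) →
        (∃ y ∈ B, G.Adj c y) → ∃ y, B = {y} := by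
      rintro B hB hBW - ⟨y, hyB, hadjy⟩
      have hyW : y ∉ W := fun h => Finset.disjoint_left.1 hBW hyB h
      rw [(hwexit c hcW y hadjy hyW).2] at hyB
      exact ⟨u₀, part_eq_singleton hP (hsing u₀ hu₀) hB hyB⟩
    have hamb1 : ∀ B ∈ P₀, Disjoint B W →
        (P₀.filter fun C => Disjoint C W ∧ (G.toTrigraph).redAdj B C).card ≤ 1 := by
      intro B hB hBW
      by_cases hBD : B = D
      · -- B = D (nonempty since B ∈ P₀)
        subst hBD
        obtain ⟨-, hDdisjU, hDnbr⟩ := hD.resolve_left (hP.1 B hB).ne_empty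
        refine le_trans (Finset.card_le_card ?_) (by simp : ({({u₀} : Finset V)} :
          Finset (Finset V)).card ≤ 1)
        intro C hC
        obtain ⟨hCP, hCW, hred⟩ := Finset.mem_filter.1 hC
        obtain ⟨a, haB, bb, hbC, hab⟩ := redAdj_exists_edge hred
        rcases hDnbr a haB bb hab with h | h
        · exact absurd (part_eq_part hP hCP hB hbC h)
            (Ne.symm ((redAdj_iff G _ _).1 hred).1)
        · rw [Finset.mem_singleton]
          rw [h] at hbC
          exact part_eq_singleton hP (hsing u₀ hu₀) hCP hbC
      · rcases part_cases hP hsing hB with ⟨z, hzU, rfl⟩ | hBU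
        · have hzW : z ∉ W := Finset.disjoint_singleton_left.1 hBW
          by_cases hzu : z = u₀
          · subst hzu
            refine le_trans (Finset.card_le_card ?_) (by simp : ({D} :
              Finset (Finset V)).card ≤ 1)
            intro C hC
            obtain ⟨hCP, hCW, hred⟩ := Finset.mem_filter.1 hC
            obtain ⟨a, haB, bb, hbC, hab⟩ := redAdj_exists_edge hred
            rw [Finset.mem_singleton] at haB
            subst haB
            by_cases hbU : bb ∈ U
            · rw [part_eq_singleton hP (hsing bb hbU) hCP hbC] at hred
              exact absurd hred (not_redAdj_singleton G _ _)
            · have hCU : Disjoint C U := disj_of_mem_not_mem hP hsing hCP hbC hbU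
              rw [Finset.mem_singleton]
              by_contra hCD
              obtain ⟨y, rfl⟩ := hadjS C hCP hCU hCD ⟨bb, hbC, hab⟩
              exact absurd hred (not_redAdj_singleton G _ _)
          · refine le_trans (Finset.card_le_card ?_) (by
              simp : (∅ : Finset (Finset V)).card ≤ 1)
            intro C hC
            obtain ⟨hCP, hCW, hred⟩ := Finset.mem_filter.1 hC
            obtain ⟨a, haB, bb, hbC, hab⟩ := redAdj_exists_edge hred
            rw [Finset.mem_singleton] at haB
            subst haB
            by_cases hbU : bb ∈ U
            · rw [part_eq_singleton hP (hsing bb hbU) hCP hbC] at hred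
              exact absurd hred (not_redAdj_singleton G _ _)
            · exact absurd (hexit _ hzU bb hab hbU) hzu
        · refine le_trans (Finset.card_le_card ?_) (hamb B hB hBU)
          intro C hC
          obtain ⟨hCP, hCW, hred⟩ := Finset.mem_filter.1 hC
          obtain ⟨a, haB, bb, hbC, hab⟩ := redAdj_exists_edge hred
          have haU : a ∉ U := Finset.disjoint_left.1 hBU haB
          by_cases hbU : bb ∈ U
          · exfalso
            have hbu : bb = u₀ := hexit bb hbU a hab.symm haU
            rw [hbu] at hbC hab
            obtain ⟨y, rfl⟩ := hadjS B hB hBU hBD ⟨a, haB, hab.symm⟩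
            rw [part_eq_singleton hP (hsing u₀ hu₀) hCP hbC] at hred
            exact absurd hred (not_redAdj_singleton G _ _)
          · exact Finset.mem_filter.2 ⟨hCP,
              disj_of_mem_not_mem hP hsing hCP hbC hbU, hred⟩
    -- ========== phase 1 ==========
    obtain ⟨f₁, hf₁0, hf₁step, hf₁end, hf₁deg⟩ :=
      IH W.card hWcard W rfl P₀ c ∅ hP hcW (fun u hu => hsing u (hWU hu))
        hexit1 hout1 hconn1 hamb1 hadjS1 (Or.inl rfl)
    rw [if_pos rfl] at hf₁step hf₁end hf₁deg
    have hf₁P₁ : f₁ (W.card - 1) = P₁ := by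
      rw [hf₁end, Finset.union_empty, Finset.erase_eq_of_notMem hemptyamb]
    -- ========== phase 2 hypotheses ==========
    have hP2 : IsPart P₂₀ := by
      refine ⟨?_, ?_, ?_⟩
      · intro A hA
        rcases Finset.mem_insert.1 hA with rfl | hA
        · exact ⟨c, Finset.mem_union_left _ hcW⟩
        · exact hP.1 A (Finset.mem_filter.1 (Finset.mem_of_mem_erase hA)).1
      · have key : ∀ B ∈ amb₀.erase D, Disjoint D' B := by
          intro B hB
          have hBD := Finset.ne_of_mem_erase hB
          obtain ⟨hBP, hBW⟩ := Finset.mem_filter.1 (Finset.mem_of_mem_erase hB)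
          refine Finset.disjoint_union_left.2 ⟨hBW.symm, ?_⟩
          rcases hD with rfl | ⟨hDP, -, -⟩
          · exact Finset.disjoint_empty_left _
          · exact hP.2.1 D hDP B hBP (Ne.symm hBD)
        intro A hA B hB hAB
        rcases Finset.mem_insert.1 hA with rfl | hA' <;>
          rcases Finset.mem_insert.1 hB with rfl | hB'
        · exact absurd rfl hAB
        · exact key B hB'
        · exact (key A hA').symm
        · exact hP.2.1 A (Finset.mem_filter.1 (Finset.mem_of_mem_erase hA')).1 B
            (Finset.mem_filter.1 (Finset.mem_of_mem_erase hB')).1 hAB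
      · intro v
        obtain ⟨A, hA, hvA⟩ := hP.2.2 v
        by_cases hAD : A = D
        · exact ⟨D', Finset.mem_insert_self _ _, Finset.mem_union_right _ (hAD ▸ hvA)⟩
        by_cases hAW : Disjoint A W
        · exact ⟨A, Finset.mem_insert_of_mem (Finset.mem_erase.2 ⟨hAD,
            Finset.mem_filter.2 ⟨hA, hAW⟩⟩), hvA⟩
        · obtain ⟨z, hzA, hzW⟩ := Finset.not_disjoint_iff.1 hAW
          have hAz : A = {z} := part_eq_singleton hP (hsing z (hWU hzW)) hA hzA
          rw [hAz, Finset.mem_singleton] at hvA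
          exact ⟨D', Finset.mem_insert_self _ _, Finset.mem_union_left _ (hvA ▸ hzW)⟩
    have hsing2 : ∀ z ∈ U', ({z} : Finset V) ∈ P₂₀ := by
      intro z hz
      obtain ⟨hzU, hzW⟩ := Finset.mem_sdiff.1 hz
      refine Finset.mem_insert_of_mem (Finset.mem_erase.2 ⟨?_, Finset.mem_filter.2
        ⟨hsing z hzU, Finset.disjoint_singleton_left.2 hzW⟩⟩)
      rcases hD with rfl | ⟨-, hDdisjU, -⟩
      · exact Finset.singleton_ne_empty z
      · intro h
        exact Finset.disjoint_left.1 hDdisjU (h ▸ Finset.mem_singleton_self z) hzU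
    have hexit2 : ∀ z ∈ U', ∀ y, G.Adj z y → y ∉ U' → z = u₀ := by
      intro z hz y hzy hyU'
      obtain ⟨hzU, hzW⟩ := Finset.mem_sdiff.1 hz
      by_cases hyW : y ∈ W
      · by_contra hzu
        exact hzW (hclos y hyW z hzy.symm hzU hzu)
      · have hyU : y ∉ U := fun h => hyU' (Finset.mem_sdiff.2 ⟨h, hyW⟩)
        exact hexit z hzU y hzy hyU
    have hout2 : (Finset.univ.filter fun y => y ∉ U' ∧ y ∉ D' ∧ G.Adj u₀ y).card ≤ 1 := by
      refine le_trans (Finset.card_le_card ?_) hout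
      intro y hy
      obtain ⟨hyuniv, hyU', hyD', hadjy⟩ := Finset.mem_filter.1 hy
      refine Finset.mem_filter.2 ⟨Finset.mem_univ _, ?_, ?_, hadjy⟩
      · intro hyU
        exact hyU' (Finset.mem_sdiff.2 ⟨hyU, fun h => hyD' (Finset.mem_union_left _ h)⟩)
      · exact fun h => hyD' (Finset.mem_union_right _ h)
    have hconn2 : ∀ z ∈ U', ∃ p : G.Walk u₀ z, ∀ y ∈ p.support, y ∈ U' := by
      intro z hz
      obtain ⟨hzU, hzW⟩ := Finset.mem_sdiff.1 hz
      obtain ⟨w', hw'⟩ := hconn z hzU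
      have hbp : w'.bypass.IsPath := w'.bypass_isPath
      have hbsupp : ∀ y ∈ w'.bypass.support, y ∈ U :=
        fun y hy => hw' y (w'.support_bypass_subset hy)
      refine ⟨w'.bypass, fun y hy => Finset.mem_sdiff.2 ⟨hbsupp y hy, ?_⟩⟩
      intro hyW
      have hu₀p₂ : u₀ ∈ (w'.bypass.dropUntil y hy).support :=
        cross_walk hclos (w'.bypass.dropUntil y hy)
          (fun s hs => hbsupp s (w'.bypass.support_dropUntil_subset hy hs)) hyW hzW
      have hu₀p₁ : u₀ ∈ (w'.bypass.takeUntil y hy).support :=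
        SimpleGraph.Walk.start_mem_support _
      have hyu : y ≠ u₀ := fun h => hu₀W (h ▸ hyW)
      have hnodup := hbp.support_nodup
      rw [← SimpleGraph.Walk.take_spec w'.bypass hy,
        SimpleGraph.Walk.support_append] at hnodup
      have hdisj := List.disjoint_of_nodup_append hnodup
      have htail : u₀ ∈ ((w'.bypass.dropUntil y hy).support).tail := by
        have hsc := SimpleGraph.Walk.support_eq_cons (w'.bypass.dropUntil y hy)
        rw [hsc] at hu₀p₂
        rcases List.mem_cons.1 hu₀p₂ with h | h
        · exact absurd h.symm hyu
        · exact h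
      exact hdisj hu₀p₁ htail
    have hamb2 : ∀ B ∈ P₂₀, Disjoint B U' →
        (P₂₀.filter fun C => Disjoint C U' ∧ (G.toTrigraph).redAdj B C).card ≤ 1 := by
      intro B hB hBU'
      rcases Finset.mem_insert.1 hB with rfl | hB'
      · refine le_trans (Finset.card_le_card (show _ ⊆ (∅ : Finset (Finset V)) from ?_))
          (by simp)
        intro C hC
        exfalso
        obtain ⟨hC₂₀, hCU', hred⟩ := Finset.mem_filter.1 hC
        obtain ⟨a, haD', bb, hbC, hab⟩ := redAdj_exists_edge hred
        have hbu : bb ∈ D' ∨ bb = u₀ := by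
          rcases Finset.mem_union.1 haD' with haW | haD
          · by_cases hbW : bb ∈ W
            · exact Or.inl (Finset.mem_union_left _ hbW)
            · exact Or.inr (hwexit a haW bb hab hbW).2
          · rcases hD with rfl | ⟨-, -, hDnbr⟩
            · exact absurd haD (Finset.notMem_empty a)
            · rcases hDnbr a haD bb hab with h | h
              · exact Or.inl (Finset.mem_union_right _ h)
              · exact Or.inr h
        rcases hbu with h | h
        · exact (Ne.symm ((redAdj_iff G _ _).1 hred).1)
            (part_eq_part hP2 hC₂₀ (Finset.mem_insert_self _ _) hbC h)
        · rw [h] at hbC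
          have hCu := part_eq_singleton hP2 (hsing2 u₀ hu₀U') hC₂₀ hbC
          rw [hCu, Finset.disjoint_singleton_left] at hCU'
          exact hCU' hu₀U'
      · have hBD := Finset.ne_of_mem_erase hB'
        obtain ⟨hBP, hBW⟩ := Finset.mem_filter.1 (Finset.mem_of_mem_erase hB')
        have hBU : Disjoint B U := by
          rw [← hU'W]
          exact Finset.disjoint_union_right.2 ⟨hBU', hBW⟩
        refine le_trans (Finset.card_le_card ?_) (hamb B hBP hBU)
        intro C hC
        obtain ⟨hC₂₀, hCU', hred⟩ := Finset.mem_filter.1 hC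
        rcases Finset.mem_insert.1 hC₂₀ with rfl | hC'
        · exfalso
          obtain ⟨a, haB, bb, hbD', hab⟩ := redAdj_exists_edge hred
          have hau : a ∈ D ∨ a = u₀ := by
            rcases Finset.mem_union.1 hbD' with hbW | hbD
            · exact Or.inr (hwexit bb hbW a hab.symm (fun h =>
                Finset.disjoint_left.1 hBW haB h)).2
            · rcases hD with rfl | ⟨-, -, hDnbr⟩
              · exact absurd hbD (Finset.notMem_empty bb)
              · rcases hDnbr bb hbD a hab.symm with h | h
                · exact Or.inl h
                · exact Or.inr h
          rcases hau with h | h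
          · rcases hD with rfl | ⟨hDP, -, -⟩
            · exact absurd h (Finset.notMem_empty a)
            · exact hBD (part_eq_part hP hBP hDP haB h)
          · rw [h] at haB
            exact Finset.disjoint_left.1 hBU haB hu₀
        · obtain ⟨hCP, hCW⟩ := Finset.mem_filter.1 (Finset.mem_of_mem_erase hC')
          refine Finset.mem_filter.2 ⟨hCP, ?_, hred⟩
          rw [← hU'W]
          exact Finset.disjoint_union_right.2 ⟨hCU', hCW⟩
    have hadjS2 : ∀ B ∈ P₂₀, Disjoint B U' → B ≠ D' →
        (∃ y ∈ B, G.Adj u₀ y) → ∃ y, B = {y} := by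
      rintro B hB hBU' hBD' ⟨y, hyB, hadjy⟩
      rcases Finset.mem_insert.1 hB with rfl | hB'
      · exact absurd rfl hBD'
      have hBD := Finset.ne_of_mem_erase hB'
      obtain ⟨hBP, hBW⟩ := Finset.mem_filter.1 (Finset.mem_of_mem_erase hB')
      by_cases hyU : y ∈ U
      · exact ⟨y, part_eq_singleton hP (hsing y hyU) hBP hyB⟩
      · exact hadjS B hBP (disj_of_mem_not_mem hP hsing hBP hyB hyU) hBD ⟨y, hyB, hadjy⟩
    have hD2 : D' ∈ P₂₀ ∧ Disjoint D' U' ∧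
        ∀ y ∈ D', ∀ z, G.Adj y z → z ∈ D' ∨ z = u₀ := by
      refine ⟨Finset.mem_insert_self _ _, ?_, ?_⟩
      · refine Finset.disjoint_union_left.2 ⟨Finset.sdiff_disjoint.symm, ?_⟩
        rcases hD with rfl | ⟨-, hDdisjU, -⟩
        · exact Finset.disjoint_empty_left _
        · exact Finset.disjoint_of_subset_right Finset.sdiff_subset hDdisjU
      · intro y hy z hadjz
        rcases Finset.mem_union.1 hy with hyW | hyD
        · by_cases hzW : z ∈ W
          · exact Or.inl (Finset.mem_union_left _ hzW)
          · exact Or.inr (hwexit y hyW z hadjz hzW).2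
        · rcases hD with rfl | ⟨-, -, hDnbr⟩
          · exact absurd hyD (Finset.notMem_empty y)
          · rcases hDnbr y hyD z hadjz with h | h
            · exact Or.inl (Finset.mem_union_right _ h)
            · exact Or.inr h
    have hD'ne : D' ≠ ∅ := fun h => (by
      rw [Finset.eq_empty_iff_forall_notMem] at h
      exact h c (Finset.mem_union_left _ hcW))
    -- ========== phase 2 ==========
    obtain ⟨f₂, hf₂0, hf₂step, hf₂end, hf₂deg⟩ :=
      IH U'.card hU'lt U' rfl P₂₀ u₀ D' hP2 hu₀U' hsing2 hexit2 hout2 hconn2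
        hamb2 hadjS2 (Or.inr hD2)
    rw [if_neg hD'ne] at hf₂step hf₂end hf₂deg
    -- ========== bridging ==========
    have hP₂₀P₁ : D = ∅ → P₂₀ = P₁ := by
      intro h
      subst h
      rw [hP₂₀def, hP₁def, hD'def, Finset.union_empty,
        Finset.erase_eq_of_notMem hemptyamb]
    have hmerge : D ≠ ∅ → MergeStep P₁ P₂₀ := by
      intro hDe
      obtain ⟨hDP, hDdisjU, hDnbr⟩ := hD.resolve_left hDe
      have hDamb : D ∈ amb₀ := Finset.mem_filter.2
        ⟨hDP, Finset.disjoint_of_subset_right hWU hDdisjU⟩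
      have hWamb : W ∉ amb₀ := fun h =>
        hWne.ne_empty (by simpa using disjoint_self.1 (Finset.mem_filter.1 h).2)
      refine ⟨W, Finset.mem_insert_self _ _, D, Finset.mem_insert_of_mem hDamb, ?_, ?_⟩
      · intro h
        exact hcD (h ▸ hcW)
      · rw [hP₁def, Finset.erase_insert hWamb]
    -- final partition equality
    have hUD : U' ∪ D' = U ∪ D := by
      rw [hD'def, ← Finset.union_assoc, hU'W]
    have hEq : (P₂₀.filter fun B => Disjoint B U').erase D'
        = (P₀.filter fun B => Disjoint B U).erase D := by
      ext B
      simp only [Finset.mem_erase, Finset.mem_filter]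
      constructor
      · rintro ⟨hBD', hB₂₀, hBU'⟩
        rcases Finset.mem_insert.1 hB₂₀ with rfl | hB'
        · exact absurd rfl hBD'
        have hBD := Finset.ne_of_mem_erase hB'
        obtain ⟨hBP, hBW⟩ := Finset.mem_filter.1 (Finset.mem_of_mem_erase hB')
        refine ⟨hBD, hBP, ?_⟩
        rw [← hU'W]
        exact Finset.disjoint_union_right.2 ⟨hBU', hBW⟩
      · rintro ⟨hBD, hBP, hBU⟩
        have hBW : Disjoint B W := Finset.disjoint_of_subset_right hWU hBU
        have hBU2 : Disjoint B U' := Finset.disjoint_of_subset_right Finset.sdiff_subset hBU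
        refine ⟨?_, Finset.mem_insert_of_mem (Finset.mem_erase.2 ⟨hBD,
          Finset.mem_filter.2 ⟨hBP, hBW⟩⟩), hBU2⟩
        intro h
        exact Finset.disjoint_left.1 hBU (h ▸ Finset.mem_union_left _ hcW) hcU
    -- ========== glue ==========
    set n₁ := W.card - 1 with hn₁
    set bb := if D = ∅ then n₁ else n₁ + 1 with hbb
    have hblen : (if D = ∅ then U.card - 1 else U.card) = bb + U'.card := by
      by_cases hDe : D = ∅
      · rw [hbb, if_pos hDe, if_pos hDe]; omega
      · rw [hbb, if_neg hDe, if_neg hDe]; omega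
    have hbge : n₁ ≤ bb := by
      by_cases hDe : D = ∅
      · rw [hbb, if_pos hDe]
      · rw [hbb, if_neg hDe]; omega
    refine ⟨fun i => if i ≤ n₁ then f₁ i else f₂ (i - bb), ?_, ?_, ?_, ?_⟩
    · simp only [Nat.zero_le, if_pos]
      exact hf₁0
    · intro i hi
      rw [hblen] at hi
      by_cases h1 : i + 1 ≤ n₁
      · simp only [if_pos (Nat.le_of_succ_le h1), if_pos h1]
        exact hf₁step i (by omega)
      · by_cases h2 : i ≤ n₁
        · have hieq : i = n₁ := by omega
          simp only [if_pos h2, if_neg h1]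
          rw [hieq, hf₁P₁]
          by_cases hDe : D = ∅
          · have hbeq : bb = n₁ := by rw [hbb, if_pos hDe]
            have he1 : n₁ + 1 - bb = 1 := by omega
            rw [he1]
            have h0 : f₂ 0 = P₁ := by rw [hf₂0, hP₂₀P₁ hDe]
            rw [← h0]
            exact hf₂step 0 (by omega)
          · have hbeq : bb = n₁ + 1 := by rw [hbb, if_neg hDe]
            have he0 : n₁ + 1 - bb = 0 := by omega
            rw [he0, hf₂0]
            exact hmerge hDe
        · have hble : bb ≤ i := by
            by_cases hDe : D = ∅
            · rw [hbb, if_pos hDe]; omega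
            · rw [hbb, if_neg hDe]; omega
          simp only [if_neg h2, if_neg (show ¬ i + 1 ≤ n₁ by omega)]
          have he : i + 1 - bb = (i - bb) + 1 := by omega
          rw [he]
          exact hf₂step (i - bb) (by omega)
    · rw [hblen]
      have h1 : ¬ bb + U'.card ≤ n₁ := by omega
      simp only [if_neg h1]
      have he : bb + U'.card - bb = U'.card := by omega
      rw [he, hf₂end, hUD, hEq]
    · intro i hi
      rw [hblen] at hi
      by_cases h2 : i ≤ n₁
      · simp only [if_pos h2]
        exact hf₁deg i (by omega)
      · simp only [if_neg h2]
        exact hf₂deg (i - bb) (by omega)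

end TwwTree

/-- every tree has twin-width at most 2. -/
theorem tww_tree_le_two {V : Type*} [Fintype V] (G : SimpleGraph V) (h : G.IsTree) :
    (G.toTrigraph).tww ≤ 2 := by
  classical
  have hconn := h.isConnected
  obtain ⟨r⟩ : Nonempty V := hconn.nonempty
  have hPart : TwwTree.IsPart (discretePart V) := by
    refine ⟨?_, ?_, ?_⟩
    · intro A hA
      obtain ⟨v, -, rfl⟩ := Finset.mem_image.1 hA
      exact ⟨v, Finset.mem_singleton_self v⟩
    · intro A hA B hB hAB
      obtain ⟨v, -, rfl⟩ := Finset.mem_image.1 hA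
      obtain ⟨w, -, rfl⟩ := Finset.mem_image.1 hB
      rw [Finset.disjoint_singleton]
      exact fun hvw => hAB (by rw [hvw])
    · intro v
      exact ⟨{v}, Finset.mem_image.2 ⟨v, Finset.mem_univ v, rfl⟩,
        Finset.mem_singleton_self v⟩
  obtain ⟨f, hf0, hfstep, hfend, hfdeg⟩ :=
    TwwTree.main_lemma h Finset.univ.card Finset.univ rfl (discretePart V) r ∅
      hPart (Finset.mem_univ r)
      (fun u _ => Finset.mem_image.2 ⟨u, Finset.mem_univ u, rfl⟩)
      (fun x _ y _ hy => absurd (Finset.mem_univ y) hy)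
      (by
        have h0 : (Finset.univ.filter fun y =>
            y ∉ Finset.univ ∧ y ∉ (∅ : Finset V) ∧ G.Adj r y) = ∅ := by
          apply Finset.eq_empty_of_forall_notMem
          intro y hy
          exact (Finset.mem_filter.1 hy).2.1 (Finset.mem_univ y)
        rw [h0]
        simp)
      (fun x _ => (hconn.preconnected r x).elim
        fun p => ⟨p, fun y _ => Finset.mem_univ y⟩)
      (by
        intro B hB hdisj
        obtain ⟨v, -, rfl⟩ := Finset.mem_image.1 hB
        exact absurd (Finset.mem_univ v)
          (Finset.disjoint_left.1 hdisj (Finset.mem_singleton_self v)))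
      (by
        intro B hB hdisj _ _
        obtain ⟨v, -, rfl⟩ := Finset.mem_image.1 hB
        exact absurd (Finset.mem_univ v)
          (Finset.disjoint_left.1 hdisj (Finset.mem_singleton_self v)))
      (Or.inl rfl)
  rw [if_pos rfl, Finset.card_univ] at hfstep hfend hfdeg
  apply Nat.sInf_le
  refine ⟨f, ⟨hf0, hfstep⟩, ?_, hfdeg⟩
  rw [hfend]
  have h1 : (discretePart V).filter (fun B => Disjoint B Finset.univ) = ∅ := by
    apply Finset.eq_empty_of_forall_notMem
    intro B hB
    obtain ⟨hBd, hdisj⟩ := Finset.mem_filter.1 hB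
    obtain ⟨v, -, rfl⟩ := Finset.mem_image.1 hBd
    exact Finset.disjoint_left.1 hdisj (Finset.mem_singleton_self v) (Finset.mem_univ v)
  rw [Finset.union_empty, h1]
  rfl

end
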